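/- For every n ≥ 2, the language L = bb(a^n)^+ ∪ b(a^(n+1))^+ over alphabet {a, b} is accepted by a DFA with 2n + 5 states, is not suffix-free, and its shortest witness to non-suffix-freeness is (b a^(n(n+1)), bb a^(n(n+1))), of size n² + n + 2. -/

import Mathlib

/-- The language `bb(a^n)^+ ∪ b(a^(n+1))^+` over the alphabet `{a, b}`,
with `a := false` and `b := true`. -/
def suffixFreeL (n : ℕ) : Set (List Bool) :=
  {w | ∃ k : ℕ, 1 ≤ k ∧ w = [true, true] ++ List.replicate (k * n) false} ∪
  {w | ∃ k : ℕ, 1 ≤ k ∧ w = [true] ++ List.replicate (k * (n + 1)) false}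

def SuffixFree {α : Type*} (L : Set (List α)) : Prop :=
  ∀ u ∈ L, ∀ w ∈ L, u <:+ w → u = w

namespace SFAux

open Fin.NatCast Fin.CommRing

inductive St (n : ℕ) : Type
  | start | b1 | b2 | dead
  | d : Fin n → St n
  | e : Fin (n + 1) → St n

variable (n : ℕ) [NeZero n]

def step : St n → Bool → St n
  | .start, true => .b1
  | .b1, true => .b2
  | .b1, false => .e 1
  | .b2, false => .d 1
  | .d i, false => .d (i + 1)
  | .e i, false => .e (i + 1)
  | _, _ => .dead

def dfa : DFA Bool (St n) := ⟨step n, .start, {s | s = .d 0 ∨ s = .e 0}⟩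

lemma evalFrom_append (s : St n) (x y : List Bool) :
    (dfa n).evalFrom s (x ++ y) = (dfa n).evalFrom ((dfa n).evalFrom s x) y :=
  List.foldl_append

lemma eval_dead (w : List Bool) : (dfa n).evalFrom .dead w = .dead := by
  induction w with
  | nil => rfl
  | cons a t ih => cases a <;> exact ih

lemma eval_d (m : ℕ) : ∀ i : Fin n, (dfa n).evalFrom (.d i) (List.replicate m false) = .d (i + m) := by
  induction m with
  | zero => intro i; simp
  | succ m ih =>
    intro i
    rw [List.replicate_succ]
    show (dfa n).evalFrom (.d (i + 1)) (List.replicate m false) = _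
    rw [ih (i + 1)]
    congr 1
    push_cast
    ring

lemma eval_e (m : ℕ) : ∀ i : Fin (n+1),
    (dfa n).evalFrom (.e i) (List.replicate m false) = .e (i + m) := by
  induction m with
  | zero => intro i; simp
  | succ m ih =>
    intro i
    rw [List.replicate_succ]
    show (dfa n).evalFrom (.e (i + 1)) (List.replicate m false) = _
    rw [ih (i + 1)]
    congr 1
    push_cast
    ring

lemma eval_b2 (m : ℕ) : (dfa n).evalFrom .b2 (List.replicate m false)
    = if m = 0 then .b2 else .d (m : Fin n) := by
  cases m with
  | zero => rfl
  | succ m =>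
    rw [List.replicate_succ]
    show (dfa n).evalFrom (.d 1) (List.replicate m false) = _
    rw [eval_d, if_neg m.succ_ne_zero]
    congr 1
    push_cast
    ring

lemma eval_b1 (m : ℕ) : (dfa n).evalFrom .b1 (List.replicate m false)
    = if m = 0 then .b1 else .e (m : Fin (n+1)) := by
  cases m with
  | zero => rfl
  | succ m =>
    rw [List.replicate_succ]
    show (dfa n).evalFrom (.e 1) (List.replicate m false) = _
    rw [eval_e, if_neg m.succ_ne_zero]
    congr 1
    push_cast
    ring

lemma eval_b2_true (m : ℕ) (rest : List Bool) :
    (dfa n).evalFrom .b2 (List.replicate m false ++ true :: rest) = .dead := by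
  rw [evalFrom_append, eval_b2]
  split_ifs
  · exact eval_dead n rest
  · exact eval_dead n rest

lemma eval_e_true (i : Fin (n+1)) (m : ℕ) (rest : List Bool) :
    (dfa n).evalFrom (.e i) (List.replicate m false ++ true :: rest) = .dead := by
  rw [evalFrom_append, eval_e]
  exact eval_dead n rest

lemma decomp (w : List Bool) : (∃ m, w = List.replicate m false) ∨
    ∃ m rest, w = List.replicate m false ++ true :: rest := by
  induction w with
  | nil => exact .inl ⟨0, rfl⟩
  | cons a t ih =>
    cases a
    · rcases ih with ⟨m, rfl⟩ | ⟨m, rest, rfl⟩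
      · exact .inl ⟨m + 1, by rw [List.replicate_succ]⟩
      · exact .inr ⟨m + 1, rest, by rw [List.replicate_succ]; rfl⟩
    · exact .inr ⟨0, t, rfl⟩

lemma rep_ne_append (N : ℕ) (l1 l2 : List Bool) :
    List.replicate N false ≠ l1 ++ true :: l2 := by
  intro h
  have : true ∈ List.replicate N false :=
    h ▸ List.mem_append_right _ (List.mem_cons_self)
  simp [List.mem_replicate] at this

lemma mem_tt (m : ℕ) : ([true, true] ++ List.replicate m false) ∈ suffixFreeL n
    ↔ ∃ k, 1 ≤ k ∧ m = k * n := by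
  constructor
  · rintro (⟨k, hk, h⟩ | ⟨k, hk, h⟩)
    · refine ⟨k, hk, ?_⟩
      have := congrArg List.length h
      simpa using this
    · exfalso
      simp only [List.cons_append, List.nil_append] at h
      injection h with _ h2
      exact rep_ne_append _ [] _ h2.symm
  · rintro ⟨k, hk, rfl⟩
    exact Or.inl ⟨k, hk, rfl⟩

lemma mem_t (m : ℕ) : ([true] ++ List.replicate m false) ∈ suffixFreeL n
    ↔ ∃ k, 1 ≤ k ∧ m = k * (n + 1) := by
  constructor
  · rintro (⟨k, hk, h⟩ | ⟨k, hk, h⟩)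
    · exfalso
      simp only [List.cons_append, List.nil_append] at h
      injection h with _ h2
      exact rep_ne_append _ [] _ h2
    · refine ⟨k, hk, ?_⟩
      have := congrArg List.length h
      simpa using this
  · rintro ⟨k, hk, rfl⟩
    exact Or.inr ⟨k, hk, rfl⟩

lemma accepts_iff (w : List Bool) : w ∈ (dfa n).accepts ↔ w ∈ suffixFreeL n := by
  rw [DFA.mem_accepts]
  show (dfa n).evalFrom .start w ∈ _ ↔ _
  rcases w with _ | ⟨a, w⟩
  · constructor
    · rintro (h | h) <;> cases h
    · rintro (⟨k, hk, h⟩ | ⟨k, hk, h⟩) <;> cases h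
  cases a
  · -- false :: w : dead
    show (dfa n).evalFrom .dead w ∈ _ ↔ _
    rw [eval_dead]
    constructor
    · rintro (h | h) <;> cases h
    · rintro (⟨k, hk, h⟩ | ⟨k, hk, h⟩) <;> simp at h
  · -- true :: w
    rcases w with _ | ⟨a, w⟩
    · -- [true]
      constructor
      · rintro (h | h) <;> cases h
      · rintro (⟨k, hk, h⟩ | ⟨k, hk, h⟩)
        · simp at h
        · simp only [List.cons_append, List.nil_append, List.cons.injEq] at h
          have hlen := congrArg List.length h.2
          simp only [List.length_nil, List.length_replicate] at hlen
          have hpos : 0 < k * (n + 1) := Nat.mul_pos hk (Nat.succ_pos n)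
          omega
    cases a
    · -- true :: false :: w : from e-chain
      show (dfa n).evalFrom (.e 1) w ∈ _ ↔ _
      rcases decomp w with ⟨m, rfl⟩ | ⟨m, rest, rfl⟩
      · rw [eval_e]
        have hcast : (1 : Fin (n+1)) + (m : Fin (n+1)) = ((m + 1 : ℕ) : Fin (n+1)) := by
          push_cast; ring
        have hw : (true : Bool) :: false :: List.replicate m false
            = [true] ++ List.replicate (m + 1) false := by
          rw [List.replicate_succ]; rfl
        rw [hw, mem_t, hcast]
        constructor
        · rintro (h | h)
          · cases h
          · have h2 : ((m + 1 : ℕ) : Fin (n+1)) = 0 := St.e.inj h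
            rw [Fin.natCast_eq_zero] at h2
            obtain ⟨c, hc⟩ := h2
            have hc1 : 1 ≤ c := Nat.pos_of_ne_zero (fun h0 => by simp [h0] at hc)
            exact ⟨c, hc1, by rw [hc]; ring⟩
        · rintro ⟨k, hk, hm⟩
          refine Or.inr ?_
          congr 1
          rw [Fin.natCast_eq_zero, hm]
          exact dvd_mul_left _ _
      · rw [show (false :: (List.replicate m false ++ true :: rest))
            = (List.replicate (m+1) false ++ true :: rest) by rw [List.replicate_succ]; rfl]
        rw [eval_e_true]
        constructor
        · rintro (h | h) <;> cases h
        · rintro (⟨k, hk, h⟩ | ⟨k, hk, h⟩) <;> exfalso <;>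
            simp only [List.cons_append, List.nil_append, List.cons.injEq] at h
          · rw [List.replicate_succ] at h
            simp at h
          · exact rep_ne_append _ _ _ h.2.symm
    · -- true :: true :: w : from b2
      show (dfa n).evalFrom .b2 w ∈ _ ↔ _
      rcases decomp w with ⟨m, rfl⟩ | ⟨m, rest, rfl⟩
      · rw [eval_b2,
          show (true :: true :: List.replicate m false)
            = [true, true] ++ List.replicate m false from rfl, mem_tt]
        split_ifs with hm
        · subst hm
          constructor
          · rintro (h | h) <;> cases h
          · rintro ⟨k, hk, hm⟩
            have : 0 < k * n := Nat.mul_pos hk (Nat.pos_of_ne_zero (NeZero.ne n))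
            omega
        · constructor
          · rintro (h | h)
            · have h1 : ((m : ℕ) : Fin n) = 0 := St.d.inj h
              rw [Fin.natCast_eq_zero] at h1
              obtain ⟨c, hc⟩ := h1
              have hc1 : 1 ≤ c := Nat.pos_of_ne_zero (fun h0 => hm (by rw [hc, h0, Nat.mul_zero]))
              exact ⟨c, hc1, by rw [hc]; ring⟩
            · cases h
          · rintro ⟨k, hk, hm'⟩
            refine Or.inl ?_
            congr 1
            rw [Fin.natCast_eq_zero, hm']
            exact dvd_mul_left _ _
      · rw [eval_b2_true]
        constructor
        · rintro (h | h) <;> cases h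
        · rintro (⟨k, hk, h⟩ | ⟨k, hk, h⟩) <;> exfalso
          · simp only [List.cons_append, List.nil_append, List.cons.injEq] at h
            exact rep_ne_append _ _ _ h.2.2.symm
          · simp only [List.cons_append, List.nil_append, List.cons.injEq] at h
            exact rep_ne_append _ [] _ h.2.symm

-- transport to Fin (2n+5)

def enc : St n → Fin (2 * n + 5)
  | .start => ⟨0, by omega⟩
  | .b1 => ⟨1, by omega⟩
  | .b2 => ⟨2, by omega⟩
  | .dead => ⟨3, by omega⟩
  | .d i => ⟨4 + i.val, by have := i.isLt; omega⟩
  | .e i => ⟨4 + n + i.val, by have := i.isLt; omega⟩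

def decN : ℕ → St n := fun v =>
  if v = 0 then .start
  else if v = 1 then .b1
  else if v = 2 then .b2
  else if v = 3 then .dead
  else if v < 4 + n then
    .d ⟨(v - 4) % n, Nat.mod_lt _ (Nat.pos_of_ne_zero (NeZero.ne n))⟩
  else .e ⟨(v - (4 + n)) % (n + 1), Nat.mod_lt _ (Nat.succ_pos n)⟩

def dec : Fin (2 * n + 5) → St n := fun k => decN n k.val

lemma dec_enc (s : St n) : dec n (enc n s) = s := by
  cases s with
  | start => rfl
  | b1 => rfl
  | b2 => rfl
  | dead => rfl
  | d i =>
    have hi := i.isLt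
    show decN n (4 + i.val) = _
    unfold decN
    rw [if_neg (by omega), if_neg (by omega), if_neg (by omega), if_neg (by omega),
      if_pos (by omega)]
    congr 1
    exact Fin.ext (by simp [Nat.mod_eq_of_lt hi])
  | e i =>
    have hi := i.isLt
    show decN n (4 + n + i.val) = _
    unfold decN
    rw [if_neg (by omega), if_neg (by omega), if_neg (by omega), if_neg (by omega),
      if_neg (by omega)]
    congr 1
    exact Fin.ext (by simp [Nat.mod_eq_of_lt hi])

lemma enc_inj : Function.Injective (enc n) :=
  Function.LeftInverse.injective (dec_enc n)

def dfaFin : DFA Bool (Fin (2 * n + 5)) :=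
  ⟨fun q a => enc n (step n (dec n q) a), enc n .start, enc n '' {s | s = .d 0 ∨ s = .e 0}⟩

lemma dfaFin_evalFrom (w : List Bool) : ∀ s : St n,
    (dfaFin n).evalFrom (enc n s) w = enc n ((dfa n).evalFrom s w) := by
  induction w with
  | nil => intro s; rfl
  | cons a t ih =>
    intro s
    show (dfaFin n).evalFrom ((dfaFin n).step (enc n s) a) t = _
    have hstep : (dfaFin n).step (enc n s) a = enc n (step n s a) := by
      show enc n (step n (dec n (enc n s)) a) = _
      rw [dec_enc]
    rw [hstep]
    exact ih (step n s a)

lemma dfaFin_accepts (w : List Bool) : w ∈ (dfaFin n).accepts ↔ w ∈ (dfa n).accepts := by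
  rw [DFA.mem_accepts, DFA.mem_accepts]
  show (dfaFin n).evalFrom (enc n .start) w ∈ _ ↔ _
  rw [dfaFin_evalFrom]
  exact Function.Injective.mem_set_image (enc_inj n)

end SFAux

lemma SFAux.min_witness {n : ℕ} (hn : 2 ≤ n) (u w : List Bool) (hu : u ∈ suffixFreeL n)
    (hw : w ∈ suffixFreeL n) (hx : ∃ x : List Bool, x ≠ [] ∧ w = x ++ u) :
    n ^ 2 + n + 2 ≤ w.length := by
  obtain ⟨x, hxne, rfl⟩ := hx
  rcases x with _ | ⟨c, x⟩
  · exact absurd rfl hxne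
  rcases hw with ⟨k, hk, hw⟩ | ⟨k, hk, hw⟩
  · simp only [List.cons_append, List.nil_append, List.cons.injEq] at hw
    obtain ⟨rfl, hw2⟩ := hw
    rcases hu with ⟨j, hj, rfl⟩ | ⟨j, hj, rfl⟩
    · rcases x with _ | ⟨c2, x⟩
      · exfalso
        simp only [List.nil_append, List.cons_append, List.cons.injEq] at hw2
        exact SFAux.rep_ne_append _ [] _ hw2.2.symm
      · exfalso
        simp only [List.cons_append, List.cons.injEq] at hw2
        exact SFAux.rep_ne_append _ x _ hw2.2.symm
    · rcases x with _ | ⟨c2, x⟩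
      · simp only [List.nil_append, List.cons_append, List.cons.injEq] at hw2
        have hlen := congrArg List.length hw2.2
        simp only [List.length_replicate] at hlen
        have hco : Nat.Coprime (n + 1) n := by
          have h1 : Nat.Coprime (1 + n) n :=
            Nat.coprime_add_self_left.mpr (Nat.coprime_one_left n)
          simpa [Nat.add_comm] using h1
        have hdvd : (n + 1) ∣ k := hco.dvd_of_dvd_mul_right ⟨j, by rw [← hlen]; ring⟩
        have hk1 : n + 1 ≤ k := Nat.le_of_dvd (by omega) hdvd
        have h2 : (n + 1) * n ≤ k * n := Nat.mul_le_mul_right n hk1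
        simp only [List.length_cons, List.length_append, List.length_replicate,
          List.length_nil]
        nlinarith [hlen]
      · exfalso
        simp only [List.cons_append, List.cons.injEq] at hw2
        exact SFAux.rep_ne_append _ x _ hw2.2.symm
  · exfalso
    simp only [List.cons_append, List.nil_append, List.cons.injEq] at hw
    obtain ⟨rfl, hw2⟩ := hw
    rcases hu with ⟨j, hj, rfl⟩ | ⟨j, hj, rfl⟩
    · exact SFAux.rep_ne_append _ x _ hw2.symm
    · exact SFAux.rep_ne_append _ x _ hw2.symm

theorem suffixFree_quadratic_witness (n : ℕ) (hn : 2 ≤ n) :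
    (∃ M : DFA Bool (Fin (2 * n + 5)),
      ∀ w : List Bool, w ∈ M.accepts ↔ w ∈ suffixFreeL n) ∧
    ¬ SuffixFree (suffixFreeL n) ∧
    (∀ u w : List Bool, u ∈ suffixFreeL n → w ∈ suffixFreeL n →
      (∃ x : List Bool, x ≠ [] ∧ w = x ++ u) → n ^ 2 + n + 2 ≤ w.length) ∧
    (([true] ++ List.replicate (n * (n + 1)) false) ∈ suffixFreeL n ∧
     ([true, true] ++ List.replicate (n * (n + 1)) false) ∈ suffixFreeL n ∧
     (∃ x : List Bool, x ≠ [] ∧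
       [true, true] ++ List.replicate (n * (n + 1)) false =
         x ++ ([true] ++ List.replicate (n * (n + 1)) false)) ∧
     ([true, true] ++ List.replicate (n * (n + 1)) false).length = n ^ 2 + n + 2) := by
  haveI : NeZero n := ⟨by omega⟩
  have hu : ([true] ++ List.replicate (n * (n + 1)) false) ∈ suffixFreeL n :=
    Or.inr ⟨n, by omega, rfl⟩
  have hw : ([true, true] ++ List.replicate (n * (n + 1)) false) ∈ suffixFreeL n :=
    Or.inl ⟨n + 1, by omega, by rw [Nat.mul_comm (n + 1) n]⟩
  refine ⟨⟨SFAux.dfaFin n, fun w => (SFAux.dfaFin_accepts n w).trans (SFAux.accepts_iff n w)⟩,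
    ?_, fun u w hu hw hx => SFAux.min_witness hn u w hu hw hx, hu, hw,
    ⟨[true], by simp, rfl⟩, ?_⟩
  · intro hsf
    have heq := hsf _ hu _ hw ⟨[true], rfl⟩
    have := congrArg List.length heq
    simp at this
  · simp only [List.length_append, List.length_cons, List.length_nil, List.length_replicate]
    ring
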